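/- Let μ₁, ..., μ_η be positive integers with sum μ, where η ≥ 1. Then the sum over pairs ∑_{1≤i<j≤η} μ_i·μ_j is at least (η-1)(μ-η+1) + C(η-1, 2). -/

import Mathlib

lemma choose_two_mul_two (n : ℕ) : n.choose 2 * 2 = n * (n - 1) := by
  induction n with
  | zero => rfl
  | succ n ih =>
    rw [Nat.choose_succ_succ, Nat.choose_one_right, Nat.add_mul, ih]
    cases n with
    | zero => rfl
    | succ m => simp only [Nat.succ_sub_one]; ring

lemma key_sum (η : ℕ) (h : Fin η → ℤ) :
    ∑ p ∈ Finset.univ.filter (fun p : Fin η × Fin η => p.1 < p.2),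
      (h p.1 + h p.2) = ((η : ℤ) - 1) * ∑ i, h i := by
  classical
  set P := Finset.univ.filter (fun p : Fin η × Fin η => p.1 < p.2) with hP
  set P' := Finset.univ.filter (fun p : Fin η × Fin η => p.2 < p.1) with hP'
  have hswap : ∑ p ∈ P, h p.2 = ∑ p ∈ P', h p.1 := by
    apply Finset.sum_nbij' (fun p => Prod.swap p) (fun p => Prod.swap p) <;>
      simp [hP, hP']
  have hsplit : ∑ p ∈ P, h p.1 + ∑ p ∈ P', h p.1
      = ∑ p ∈ Finset.univ.filter (fun p : Fin η × Fin η => p.1 ≠ p.2), h p.1 := by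
    rw [← Finset.sum_union]
    · congr 1
      ext p
      simp only [hP, hP', Finset.mem_union, Finset.mem_filter, Finset.mem_univ,
        true_and, ne_eq]
      constructor
      · rintro (h1 | h1) <;> intro he <;> rw [he] at h1 <;> exact lt_irrefl _ h1
      · intro hne
        rcases lt_or_gt_of_ne hne with h1 | h1
        · exact Or.inl h1
        · exact Or.inr h1
    · rw [Finset.disjoint_left]
      intro p hp1 hp2
      simp only [hP, hP', Finset.mem_filter] at hp1 hp2
      exact absurd hp2.2 (not_lt.mpr hp1.2.le)
  have hne_sum : ∑ p ∈ Finset.univ.filter (fun p : Fin η × Fin η => p.1 ≠ p.2), h p.1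
      = ((η : ℤ) - 1) * ∑ i, h i := by
    rw [Finset.sum_filter, Fintype.sum_prod_type]
    have hstep : ∀ i : Fin η, (∑ j : Fin η, if i ≠ j then h i else 0)
        = ((η : ℤ) - 1) * h i := by
      intro i
      have h1 : (∑ j : Fin η, if i ≠ j then h i else 0)
          = (∑ _j : Fin η, h i) - (∑ j : Fin η, if i = j then h i else 0) := by
        rw [← Finset.sum_sub_distrib]
        apply Finset.sum_congr rfl
        intro j _
        by_cases hij : i = j <;> simp [hij]
      rw [h1, Finset.sum_const, Finset.sum_ite_eq]
      simp [Finset.card_univ]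
      ring
    rw [Finset.sum_congr rfl (fun i _ => hstep i), ← Finset.mul_sum]
  rw [Finset.sum_add_distrib, hswap, hsplit, hne_sum]

theorem stmt_5 (η μ : ℕ) (hη : 1 ≤ η) (f : Fin η → ℕ)
    (hf : ∀ i, 1 ≤ f i) (hsum : ∑ i, f i = μ) :
    ((η : ℤ) - 1) * ((μ : ℤ) - η + 1) + (Nat.choose (η - 1) 2 : ℤ) ≤
      (↑(∑ p ∈ Finset.univ.filter (fun p : Fin η × Fin η => p.1 < p.2),
          f p.1 * f p.2) : ℤ) := by
  classical
  set P := Finset.univ.filter (fun p : Fin η × Fin η => p.1 < p.2) with hP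
  set g : Fin η → ℤ := fun i => (f i : ℤ) - 1 with hg
  have hg0 : ∀ i, 0 ≤ g i := fun i => by
    have := hf i; simp [hg]; exact_mod_cast this
  have hgsum : ∑ i, g i = (μ : ℤ) - η := by
    simp only [hg, Finset.sum_sub_distrib, Finset.sum_const, Finset.card_univ,
      Fintype.card_fin, nsmul_eq_mul, mul_one]
    rw [← hsum]
    push_cast
    ring
  have hcast : (↑(∑ p ∈ P, f p.1 * f p.2) : ℤ) = ∑ p ∈ P, (f p.1 : ℤ) * (f p.2 : ℤ) := by
    push_cast; rfl
  have hexpand : ∑ p ∈ P, (f p.1 : ℤ) * (f p.2 : ℤ)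
      = ∑ p ∈ P, g p.1 * g p.2 + ∑ p ∈ P, (g p.1 + g p.2) + ∑ _p ∈ P, (1 : ℤ) := by
    rw [← Finset.sum_add_distrib, ← Finset.sum_add_distrib]
    apply Finset.sum_congr rfl
    intro p _
    simp only [hg]
    ring
  have hkeyg : ∑ p ∈ P, (g p.1 + g p.2) = ((η : ℤ) - 1) * ((μ : ℤ) - η) := by
    rw [hP, key_sum, hgsum]
  have hkey1 : (2 : ℤ) * ∑ _p ∈ P, (1 : ℤ) = ((η : ℤ) - 1) * η := by
    have := key_sum η (fun _ => (1 : ℤ))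
    simp only [Finset.sum_const, Finset.card_univ, Fintype.card_fin,
      nsmul_eq_mul, mul_one] at this ⊢
    rw [← hP] at this
    linarith [this]
  have hgg : 0 ≤ ∑ p ∈ P, g p.1 * g p.2 :=
    Finset.sum_nonneg fun p _ => mul_nonneg (hg0 p.1) (hg0 p.2)
  have hchoose : ((η - 1).choose 2 : ℤ) * 2 = ((η : ℤ) - 1) * ((η : ℤ) - 2) ∨
      η = 1 := by
    rcases Nat.lt_or_ge η 2 with h2 | h2
    · right; omega
    · left
      have := choose_two_mul_two (η - 1)
      have hc : ((η - 1).choose 2 * 2 : ℤ) = ((η - 1) * (η - 1 - 1) : ℕ) := by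
        exact_mod_cast congrArg (Nat.cast : ℕ → ℤ) this
      push_cast [Nat.cast_sub (by omega : 1 ≤ η), Nat.cast_sub (by omega : 1 ≤ η - 1)] at hc
      push_cast at hc ⊢
      linarith [hc]
  rw [hcast, hexpand, hkeyg]
  rcases hchoose with hc | h1
  · nlinarith [hkey1, hgg]
  · subst h1
    simp_all
    exact add_nonneg hgg (by positivity)
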